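/- arXiv:2501.10220 — 9 statements merged into one kernel-verified Lean document; each statement's English description precedes it below -/
import Mathlib

section
/- With β and a(n) as above (β(-1)=0, β(0)=1, the recursion (q^n-1)β(n) = (q^n+q^{n-1}-a)β(n-1) - (q^{n-1}-q)β(n-2), and a(n) = (q^n+1) - (q^n-1)β(n)/β(n-1)), assuming β(n) > 0 for all n ≥ 0 and a(n) ≠ q^n + 1 for the relevant n, the a-invariants satisfy the recursion a(n+1) = 1 - q^n + a + (q^n - q)(q^n - 1)/(q^n + 1 - a(n)) for all n ≥ 1. -/
/-- Structural recursion for the a-invariants: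
a(n+1) = 1 - q^n + a + (q^n - q)(q^n - 1)/(q^n + 1 - a(n)). -/
theorem a_recursion (q a : ℝ) (hq : 2 ≤ q) (β A : ℤ → ℝ)
    (h0 : β (-1) = 0) (h1 : β 0 = 1)
    (hrec : ∀ n : ℤ, 1 ≤ n →
      (q ^ n - 1) * β n = (q ^ n + q ^ (n - 1) - a) * β (n - 1)
        - (q ^ (n - 1) - q) * β (n - 2))
    (hβ : ∀ n : ℤ, 0 ≤ n → 0 < β n)
    (hA : ∀ n : ℤ, 1 ≤ n → A n = (q ^ n + 1) - (q ^ n - 1) * β n / β (n - 1))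
    (hne : ∀ n : ℤ, 1 ≤ n → A n ≠ q ^ n + 1) :
    ∀ n : ℤ, 1 ≤ n →
      A (n + 1) = 1 - q ^ n + a + (q ^ n - q) * (q ^ n - 1) / (q ^ n + 1 - A n) := by
  intro n hn
  have hq0 : (0:ℝ) < q := by linarith
  have hqn1 : (1:ℝ) < q ^ n := one_lt_zpow₀ (by linarith) (by linarith)
  have hqn0 : q ^ n - 1 ≠ 0 := by linarith
  have hβn : 0 < β n := hβ n (by linarith)
  have hβn1 : 0 < β (n - 1) := hβ (n - 1) (by linarith)
  have hr := hrec (n + 1) (by linarith)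
  have e1 : n + 1 - 1 = n := by ring
  have e2 : n + 1 - 2 = n - 1 := by ring
  rw [e1, e2] at hr
  have hz : q ^ (n + 1) = q ^ n * q := by
    rw [zpow_add_one₀ (ne_of_gt hq0)]
  have hD : q ^ n + 1 - A n = (q ^ n - 1) * β n / β (n - 1) := by
    rw [hA n hn]; ring
  have hD0 : q ^ n + 1 - A n ≠ 0 := by
    rw [hD]
    positivity
  rw [hz] at hr
  rw [hA (n + 1) (by linarith), e1, hD, hz]
  field_simp
  linear_combination (-1:ℝ) * hr
end

section
/- Let q ≥ 2 and |a| ≤ 2√q, and define a(3) = 1 - q² + a + (q² - q)(q² - 1)/(q² + q - a). Then |a(3) - (2 + 2a - 2q - 3a/q)| ≤ C/q for an absolute constant C (e.g. C = 50) valid for all q ≥ 16. -/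
/-- Asymptotic for a(3): |a(3) - (2 + 2a - 2q - 3a/q)| ≤ 50/q for q ≥ 16. -/
theorem a_three_asymptotic (q a : ℝ) (hq : 16 ≤ q) (ha : |a| ≤ 2 * Real.sqrt q) :
    |(1 - q ^ 2 + a + (q ^ 2 - q) * (q ^ 2 - 1) / (q ^ 2 + q - a))
      - (2 + 2 * a - 2 * q - 3 * a / q)| ≤ 50 / q := by
  set s := Real.sqrt q with hs
  have hq0 : (0:ℝ) < q := by linarith
  have hs2 : s ^ 2 = q := Real.sq_sqrt (by linarith)
  have hs4 : 4 ≤ s := by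
    have : Real.sqrt 16 ≤ s := Real.sqrt_le_sqrt hq
    rwa [show (16:ℝ) = 4 ^ 2 by norm_num, Real.sqrt_sq (by norm_num)] at this
  have ha1 : a ≤ 2 * s := le_trans (le_abs_self a) ha
  have ha2 : -(2 * s) ≤ a := neg_le_of_abs_le ha
  have haq : a ≤ q := by nlinarith
  have hD : 0 < q ^ 2 + q - a := by nlinarith
  have hkey : (1 - q ^ 2 + a + (q ^ 2 - q) * (q ^ 2 - 1) / (q ^ 2 + q - a))
      - (2 + 2 * a - 2 * q - 3 * a / q)
      = (q * (4 * a + a ^ 2) - 3 * a ^ 2) / (q * (q ^ 2 + q - a)) := by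
    rw [eq_div_iff (mul_pos hq0 hD).ne', div_eq_mul_inv, div_eq_mul_inv]
    have hd : (q ^ 2 + q - a) * (q ^ 2 + q - a)⁻¹ = 1 := mul_inv_cancel₀ hD.ne'
    have hq' : q * q⁻¹ = 1 := mul_inv_cancel₀ hq0.ne'
    linear_combination ((q ^ 2 - q) * (q ^ 2 - 1) * q) * hd + (3 * a * (q ^ 2 + q - a)) * hq'
  rw [hkey, abs_div, abs_of_pos (mul_pos hq0 hD), div_le_div_iff₀ (mul_pos hq0 hD) hq0]
  rw [abs_le] at ha
  have h8 : 8 * s ≤ 2 * q := by nlinarith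
  have hasq : a ^ 2 ≤ 4 * q := by nlinarith
  have h8q : 8 * s * q ≤ 2 * q * q := by nlinarith
  have hub : q * (4 * a + a ^ 2) - 3 * a ^ 2 ≤ 7 * q ^ 2 := by nlinarith [mul_le_mul_of_nonneg_left ha1 hq0.le, mul_le_mul_of_nonneg_left hasq hq0.le]
  have hlb : -(7 * q ^ 2) ≤ q * (4 * a + a ^ 2) - 3 * a ^ 2 := by nlinarith [mul_le_mul_of_nonneg_left ha2 hq0.le]
  have habs : |q * (4 * a + a ^ 2) - 3 * a ^ 2| ≤ 7 * q ^ 2 := abs_le.mpr ⟨hlb, hub⟩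
  calc |q * (4 * a + a ^ 2) - 3 * a ^ 2| * q ≤ 7 * q ^ 2 * q := by
        nlinarith [abs_nonneg (q * (4 * a + a ^ 2) - 3 * a ^ 2)]
    _ ≤ 50 * (q * (q ^ 2 + q - a)) := by nlinarith
end

section
/- Fix n ≥ 3. There exist constants C > 0 and Q₀ such that for all real q ≥ Q₀ and all real a with |a| ≤ 2√q, the quantities a(k) defined by a(1) = a and a(k+1) = 1 - q^k + a + (q^k - q)(q^k - 1)/(q^k + 1 - a(k)) satisfy |a(n) - ((5-n) + (n-1)a - (n-1)q + 3a/q·(-1))| = |a(n) - ((5-n) + (n-1)a - (n-1)q - 3a/q)| ≤ C/q. -/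
noncomputable def fv (m : ℕ) (q a : ℝ) : ℝ :=
  (5 - (m : ℝ)) + ((m : ℝ) - 1) * a - ((m : ℝ) - 1) * q - 3 * a / q

def Good (n : ℕ) : Prop :=
  ∃ C > (0 : ℝ), ∃ Q₀ : ℝ, ∀ q : ℝ, Q₀ ≤ q → ∀ a : ℝ, |a| ≤ 2 * Real.sqrt q →
    ∀ A : ℕ → ℝ, A 1 = a →
      (∀ k : ℕ, 1 ≤ k →
        A (k + 1) = 1 - q ^ k + a + (q ^ k - q) * (q ^ k - 1) / (q ^ k + 1 - A k)) →
      |A n - fv n q a| ≤ C / q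

lemma abs_a_le_q {q a : ℝ} (hq4 : (4:ℝ) ≤ q) (ha : |a| ≤ 2 * Real.sqrt q) :
    |a| ≤ q := by
  have hq0 : (0:ℝ) ≤ q := by linarith
  have hs := Real.sq_sqrt hq0
  have hs0 := Real.sqrt_nonneg q
  nlinarith [sq_nonneg (Real.sqrt q - 2)]

lemma good3 : Good 3 := by
  refine ⟨11, by norm_num, 4, ?_⟩
  intro q hq a ha A hA1 hrec
  have hq0 : (0:ℝ) < q := by linarith
  have haq : |a| ≤ q := abs_a_le_q hq ha
  have ha1 := abs_le.mp haq
  have hA2 : A 2 = 1 - q + a := by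
    have h := hrec 1 le_rfl
    rw [hA1] at h
    simp only [pow_one, sub_self, zero_mul, zero_div, add_zero] at h
    exact h
  have hden0 : (0:ℝ) < q^2 + q - a := by nlinarith
  have hA3 := hrec 2 one_le_two
  rw [hA2] at hA3
  have hden1 : q^2 + 1 - (1 - q + a) ≠ 0 := by intro h; exact hden0.ne' (by linarith)
  have hkey : A 3 - fv 3 q a = a * (4*q + a*(q-3)) / (q * (q^2 + q - a)) := by
    rw [hA3]; simp only [fv]; push_cast
    rw [show q^2 + 1 - (1 - q + a) = q^2 + q - a by ring]
    have hden2 : q^2 + q - a ≠ 0 := hden0.ne'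
    have hqne : q ≠ 0 := hq0.ne'
    rw [eq_div_iff (mul_ne_zero hqne hden2)]
    have e1 : (q ^ 2 - q) * (q ^ 2 - 1) / (q^2 + q - a) * (q^2 + q - a) = (q ^ 2 - q) * (q ^ 2 - 1) := div_mul_cancel₀ _ hden2
    have e2 : 3 * a / q * q = 3 * a := div_mul_cancel₀ _ hqne
    linear_combination q * e1 + (q^2 + q - a) * e2
  rw [hkey, abs_div]
  have hdp : (0:ℝ) < q * (q^2 + q - a) := mul_pos hq0 hden0
  rw [abs_of_pos hdp, div_le_div_iff₀ hdp hq0]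
  -- |a*(4q+a(q-3))| * q ≤ 11 * (q*(q²+q-a))
  have hs := Real.sq_sqrt hq0.le
  have hs0 := Real.sqrt_nonneg q
  have hs2 : 2 ≤ Real.sqrt q := by nlinarith [sq_nonneg (Real.sqrt q - 2)]
  set s := Real.sqrt q with hsdef
  have ha2 := abs_le.mp ha
  have habs : |a * (4*q + a*(q-3))| ≤ 2*s*(4*q + 2*s*(q+3)) := by
    rw [abs_mul]
    have h1 : |4*q + a*(q-3)| ≤ 4*q + 2*s*(q+3) := by
      have h1a : |4*q + a*(q-3)| ≤ |4*q| + |a*(q-3)| := abs_add_le _ _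
      have h1b : |4*q| = 4*q := abs_of_pos (by linarith)
      have h1c : |a*(q-3)| = |a| * |q-3| := abs_mul _ _
      have h1d : |q - 3| ≤ q + 3 := by rw [abs_le]; constructor <;> linarith
      nlinarith [abs_nonneg a, abs_nonneg (q-3)]
    calc |a| * |4*q + a*(q-3)| ≤ (2*s) * (4*q + 2*s*(q+3)) :=
          mul_le_mul ha h1 (abs_nonneg _) (by nlinarith)
      _ = 2*s*(4*q + 2*s*(q+3)) := by ring
  have hsq : s ≤ q / 2 := by nlinarith
  nlinarith [mul_le_mul_of_nonneg_right habs hq0.le, abs_nonneg (a * (4*q + a*(q-3)))]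

set_option maxHeartbeats 1000000 in
lemma step (k : ℕ) (hk : 3 ≤ k) (h : Good k) : Good (k+1) := by
  obtain ⟨C, hC, Q₀, hIH⟩ := h
  obtain ⟨K, hKdef⟩ : ∃ K : ℝ, K = (k : ℝ) := ⟨_, rfl⟩
  have hK3 : (3:ℝ) ≤ K := by rw [hKdef]; exact_mod_cast hk
  obtain ⟨M, hMdef⟩ : ∃ M : ℝ, M = 1 + C + 4*K*(4*K+2+C) := ⟨_, rfl⟩
  have hM : (0:ℝ) < M := by
    rw [hMdef]
    have := mul_pos (by linarith : (0:ℝ) < 4*K) (by linarith : (0:ℝ) < 4*K+2+C)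
    linarith [this, hC]
  refine ⟨2*M, by linarith, max Q₀ (max 4 (2*(6*K+C))), ?_⟩
  intro q hq a ha A hA1 hrec
  have hqQ : Q₀ ≤ q := le_trans (le_max_left _ _) hq
  have hq4 : (4:ℝ) ≤ q := le_trans (le_trans (le_max_left _ _) (le_max_right _ _)) hq
  have hq6 : 2*(6*K+C) ≤ q := le_trans (le_trans (le_max_right _ _) (le_max_right _ _)) hq
  have hq0 : (0:ℝ) < q := by linarith
  have hq1 : (1:ℝ) ≤ q := by linarith
  have haq : |a| ≤ q := abs_a_le_q hq4 ha
  have hE0 := hIH q hqQ a ha A hA1 hrec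
  have hP : q^3 ≤ q^k := pow_le_pow_right₀ hq1 hk
  obtain ⟨E, hEdef⟩ : ∃ E : ℝ, A k = fv k q a + E := ⟨A k - fv k q a, by ring⟩
  obtain ⟨u, hudef⟩ : ∃ u : ℝ, u = (K-1)*a - K*q + (3-K) - 3*a/q := ⟨_, rfl⟩
  have hfvk : fv k q a = (5-K) + (K-1)*a - (K-1)*q - 3*a/q := by
    simp only [fv, hKdef]
  have hfvk1 : fv (k+1) q a = (5-(K+1)) + ((K+1)-1)*a - ((K+1)-1)*q - 3*a/q := by
    simp only [fv, hKdef]; push_cast; ring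
  have hEC : |E| ≤ C / q := by
    have : E = A k - fv k q a := by linarith [hEdef]
    rw [this]; exact hE0
  have hCq : C ≤ C*q := by
    have := mul_nonneg hC.le (by linarith : (0:ℝ) ≤ q - 1); linarith [this]
  have hECq : |E| ≤ C := le_trans hEC (by rw [div_le_iff₀ hq0]; linarith [hCq])
  have hEb := abs_le.mp hECq
  have ht : |a/q| ≤ 1 := by
    rw [abs_div, abs_of_pos hq0]
    exact (div_le_one hq0).mpr haq
  have htb := abs_le.mp ht
  have hab := abs_le.mp haq
  have hKq : 3*q ≤ K*q := mul_le_mul_of_nonneg_right hK3 hq0.le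
  have hKq1 : (0:ℝ) ≤ K*(q-1) := mul_nonneg (by linarith) (by linarith)
  have hu_abs : |u| ≤ 4*K*q := by
    have h1 : (K-1)*a ≤ (K-1)*q := by
      have := mul_nonneg (by linarith : (0:ℝ) ≤ K-1) (by linarith [hab.2] : (0:ℝ) ≤ q - a)
      linarith [this]
    have h2 : -((K-1)*q) ≤ (K-1)*a := by
      have := mul_nonneg (by linarith : (0:ℝ) ≤ K-1) (by linarith [hab.1] : (0:ℝ) ≤ q + a)
      linarith [this]
    have h3 : u = (K-1)*a - K*q + (3-K) - 3*(a/q) := by rw [hudef]; ring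
    rw [abs_le, h3]
    constructor
    · linarith [htb.1, htb.2, hKq, hKq1]
    · linarith [htb.1, htb.2, hKq, hKq1]
  have hub := abs_le.mp hu_abs
  have hsum : |u + q + 1 + E| ≤ (4*K+2+C)*q := by
    have a1 : |u + q + 1 + E| ≤ |u + q + 1| + |E| := abs_add_le _ _
    have a2 : |u + q + 1| ≤ |u + q| + |1| := abs_add_le _ _
    have a3 : |u + q| ≤ |u| + |q| := abs_add_le _ _
    have a4 : |q| = q := abs_of_pos hq0
    have a5 : |(1:ℝ)| = 1 := abs_one
    linarith [hu_abs, hECq, hCq, hq1]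
  have hDpos : q^k / 2 ≤ q^k - u - q - 1 - E := by
    have h6 : 2*(6*K+C)*q ≤ q*q := mul_le_mul_of_nonneg_right hq6 hq0.le
    have hq23 : q*q ≤ q*q*q := by
      have := mul_nonneg (mul_nonneg hq0.le hq0.le) (by linarith : (0:ℝ) ≤ q - 1)
      linarith [this]
    linarith [hub.2, hEb.2, hCq, h6, hP, hKq, hq23, hq1]
  have hD0 : (0:ℝ) < q^k - u - q - 1 - E := by
    have : (0:ℝ) < q^k / 2 := by positivity
    linarith
  have hDval : q^k + 1 - A k = q^k - u - q - 1 - E := by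
    rw [hEdef, hfvk, hudef]; ring
  have hrecn := hrec k (by omega)
  have hid1 : A (k+1) - fv (k+1) q a
      = (q^k - q)*(q^k - 1)/(q^k - u - q - 1 - E) - (q^k + u) := by
    rw [hrecn, hDval, hfvk1, hudef]; ring
  have hid : A (k+1) - fv (k+1) q a
      = (q + q^k*E + u*(u+q+1+E)) / (q^k - u - q - 1 - E) := by
    rw [hid1]
    rw [div_sub' hD0.ne']
    congr 1
    ring
  rw [hid, abs_div, abs_of_pos hD0]
  have hq2 : q^2 ≤ q^k / q := by
    rw [le_div_iff₀ hq0]; linarith [hP]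
  have hqk0 : (0:ℝ) ≤ q^k := by positivity
  have hKq0 : (0:ℝ) ≤ 4*K*q := by linarith [hKq, hq0]
  have hKC0 : (0:ℝ) ≤ 4*K*(4*K+2+C) := by
    have := mul_pos (by linarith : (0:ℝ) < K) (by linarith : (0:ℝ) < 4*K+2+C)
    linarith [this]
  have hnum : |q + q^k*E + u*(u+q+1+E)| ≤ M * q^k / q := by
    have e0 : |q + q^k*E + u*(u+q+1+E)| ≤ q + q^k * |E| + |u| * |u+q+1+E| := by
      have b1 : |q + q^k*E + u*(u+q+1+E)| ≤ |q + q^k*E| + |u*(u+q+1+E)| := abs_add_le _ _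
      have b2 : |q + q^k*E| ≤ |q| + |q^k*E| := abs_add_le _ _
      have b3 : |q^k*E| = q^k * |E| := by rw [abs_mul, abs_of_nonneg hqk0]
      have b4 : |u*(u+q+1+E)| = |u| * |u+q+1+E| := abs_mul _ _
      have b5 : |q| = q := abs_of_pos hq0
      linarith
    have e1 : q ≤ q^k/q := by
      have hqq : q*1 ≤ q*q := mul_le_mul_of_nonneg_left hq1 hq0.le
      linarith [hq2, hqq]
    have e2 : q^k * |E| ≤ C*(q^k/q) := by
      have := mul_le_mul_of_nonneg_left hEC hqk0
      calc q^k * |E| ≤ q^k*(C/q) := this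
        _ = C*(q^k/q) := by ring
    have e3 : |u| * |u+q+1+E| ≤ 4*K*(4*K+2+C)*(q^k/q) := by
      have e3a : |u| * |u+q+1+E| ≤ (4*K*q)*((4*K+2+C)*q) :=
        mul_le_mul hu_abs hsum (abs_nonneg _) hKq0
      have e3c : 4*K*(4*K+2+C)*q^2 ≤ 4*K*(4*K+2+C)*(q^k/q) :=
        mul_le_mul_of_nonneg_left hq2 hKC0
      linarith [e3a, e3c]
    have e4 : M * q^k / q = q^k/q + C*(q^k/q) + 4*K*(4*K+2+C)*(q^k/q) := by
      rw [hMdef]; ring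
    linarith
  rw [div_le_div_iff₀ hD0 hq0]
  have h1 : |q + q^k*E + u*(u+q+1+E)| * q ≤ M * q^k := by
    have := mul_le_mul_of_nonneg_right hnum hq0.le
    rwa [div_mul_cancel₀ _ hq0.ne'] at this
  have h2 : M * q^k ≤ 2*M * (q^k - u - q - 1 - E) := by
    calc M * q^k = 2*M*(q^k/2) := by ring
      _ ≤ 2*M * (q^k - u - q - 1 - E) :=
          mul_le_mul_of_nonneg_left hDpos (by linarith)
  linarith

/-- Theorem 15: a(n) = (5-n) + (n-1)a - (n-1)q - 3a/q + O(1/q), uniformly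
over |a| ≤ 2√q. -/
theorem a_n_refined_asymptotic (n : ℕ) (hn : 3 ≤ n) :
    ∃ C > (0 : ℝ), ∃ Q₀ : ℝ, ∀ q : ℝ, Q₀ ≤ q → ∀ a : ℝ, |a| ≤ 2 * Real.sqrt q →
      ∀ A : ℕ → ℝ, A 1 = a →
        (∀ k : ℕ, 1 ≤ k →
          A (k + 1) = 1 - q ^ k + a + (q ^ k - q) * (q ^ k - 1) / (q ^ k + 1 - A k)) →
        |A n - ((5 - (n : ℝ)) + ((n : ℝ) - 1) * a - ((n : ℝ) - 1) * q - 3 * a / q)|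
          ≤ C / q := by
  have h : Good n := Nat.le_induction good3 (fun k hk ih => step k hk ih) n hn
  obtain ⟨C, hC, Q₀, h⟩ := h
  exact ⟨C, hC, Q₀, fun q hq a ha A hA1 hrec => h q hq a ha A hA1 hrec⟩
end

section
/- Fix n ≥ 3. There exist constants C > 0 and Q₀ such that for all real q ≥ Q₀ and all real a with |a| ≤ 2√q, the recursively defined a(n) satisfies |a(n) - ((5-n) + (n-1)a - (n-1)q)| ≤ C/√q. -/
set_option maxHeartbeats 1000000

private lemma step_id (c q a u x : ℝ) (hDne : u + 1 - x ≠ 0) :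
    (1 - u + a + (u - q) * (u - 1) / (u + 1 - x)) - ((5 - (c + 1)) + c * a - c * q)
      = (q - (-c*q + (c-1)*a + 3 - c) * ((c-1)*q - (c-1)*a + (c-4))
          + (u - c*q + (c-1)*a + 3 - c) * (x - ((5 - c) + (c - 1) * a - (c - 1) * q)))
        / (u + 1 - x) := by
  field_simp
  ring

/-- Weaker asymptotic: a(n) = (5-n) + (n-1)a - (n-1)q + O(1/√q). -/
theorem a_n_asymptotic (n : ℕ) (hn : 3 ≤ n) :
    ∃ C > (0 : ℝ), ∃ Q₀ : ℝ, ∀ q : ℝ, Q₀ ≤ q → ∀ a : ℝ, |a| ≤ 2 * Real.sqrt q →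
      ∀ A : ℕ → ℝ, A 1 = a →
        (∀ k : ℕ, 1 ≤ k →
          A (k + 1) = 1 - q ^ k + a + (q ^ k - q) * (q ^ k - 1) / (q ^ k + 1 - A k)) →
        |A n - ((5 - (n : ℝ)) + ((n : ℝ) - 1) * a - ((n : ℝ) - 1) * q)|
          ≤ C / Real.sqrt q := by
  induction n, hn using Nat.le_induction with
  | base =>
    refine ⟨12, by norm_num, 4, ?_⟩
    intro q hq a ha A hA1 hrec
    have hq0 : (0:ℝ) < q := by linarith
    have hs0 : 0 < Real.sqrt q := Real.sqrt_pos.mpr hq0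
    set s := Real.sqrt q with hsdef
    have hss : s * s = q := Real.mul_self_sqrt hq0.le
    have hs2 : 2 ≤ s := by nlinarith [hs0, hss]
    have hb := abs_le.mp ha
    have haq : |a| ≤ q := by
      rw [abs_le]; constructor <;> nlinarith [hb.1, hb.2]
    have haq' : -q ≤ a ∧ a ≤ q := abs_le.mp haq
    have hA2 : A 2 = 1 - q + a := by
      rw [show (2:ℕ) = 1 + 1 from rfl, hrec 1 le_rfl, hA1, pow_one]
      simp [sub_self]
    have hDpos : (0:ℝ) < q^2 + q - a := by nlinarith [haq'.2]
    have hDne : q^2 + q - a ≠ 0 := ne_of_gt hDpos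
    have hA3 : A 3 - (2 + 2*a - 2*q) = (a^2 - 3*a*q + a) / (q^2 + q - a) := by
      have h := hrec 2 (by norm_num)
      rw [hA2] at h
      have hd : q ^ 2 + 1 - (1 - q + a) = q^2 + q - a := by ring
      rw [hd] at h
      rw [show (3:ℕ) = 2 + 1 from rfl, h]
      rw [eq_div_iff hDne, sub_mul, add_mul, div_mul_cancel₀ _ hDne]
      ring
    have hgoal : |A 3 - ((5 - ((3:ℕ):ℝ)) + (((3:ℕ):ℝ) - 1) * a - (((3:ℕ):ℝ) - 1) * q)|
        = |a^2 - 3*a*q + a| / (q^2 + q - a) := by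
      rw [show ((5 - ((3:ℕ):ℝ)) + (((3:ℕ):ℝ) - 1) * a - (((3:ℕ):ℝ) - 1) * q)
          = 2 + 2*a - 2*q by push_cast; ring, hA3, abs_div, abs_of_pos hDpos]
    rw [hgoal, div_le_div_iff₀ hDpos hs0]
    have hnum : |a^2 - 3*a*q + a| ≤ 12 * q * s := by
      have p1 : (0:ℝ) ≤ (2*s - a) * q := mul_nonneg (by linarith [hb.2]) hq0.le
      have p2 : (0:ℝ) ≤ (2*s + a) * q := mul_nonneg (by linarith [hb.1]) hq0.le
      have p3 : (0:ℝ) ≤ (2*s - a) * (2*s + a) :=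
        mul_nonneg (by linarith [hb.2]) (by linarith [hb.1])
      have p4 : (0:ℝ) ≤ q * (s - 2) := mul_nonneg hq0.le (by linarith)
      have p5 : (0:ℝ) ≤ (q - 1) * s := mul_nonneg (by linarith) hs0.le
      rw [abs_le]
      constructor <;> nlinarith [p1, p2, p3, p4, p5, hss]
    have h12 : |a^2 - 3*a*q + a| * s ≤ 12 * q * q := by
      nlinarith [mul_le_mul_of_nonneg_right hnum hs0.le, hss, hq0]
    linarith [h12, haq'.2]
  | succ k hk IH =>
    obtain ⟨C, hC, Q₀, hIH⟩ := IH
    refine ⟨20*(k:ℝ)^2 + 4*C, by positivity, max Q₀ (4*(k:ℝ) + 2*C + 4), ?_⟩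
    intro q hq a ha A hA1 hrec
    have hk3 : (3:ℝ) ≤ (k:ℝ) := by exact_mod_cast hk
    have hqQ : Q₀ ≤ q := le_trans (le_max_left _ _) hq
    have hqk : 4*(k:ℝ) + 2*C + 4 ≤ q := le_trans (le_max_right _ _) hq
    have hq4 : (4:ℝ) ≤ q := by linarith
    have hq0 : (0:ℝ) < q := by linarith
    have hq1 : (1:ℝ) ≤ q := by linarith
    have hs0 : 0 < Real.sqrt q := Real.sqrt_pos.mpr hq0
    set s := Real.sqrt q with hsdef
    have hss : s * s = q := Real.mul_self_sqrt hq0.le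
    have hs2 : 2 ≤ s := by nlinarith [hs0, hss]
    have hs1 : 1 ≤ s := by linarith
    have hsq : s ≤ q := by nlinarith [hs0, hss]
    have hb := abs_le.mp ha
    have h2s : 2 * s ≤ q := by nlinarith [hss, hs2]
    have haq : |a| ≤ q := ha.trans h2s
    have haq' : -q ≤ a ∧ a ≤ q := abs_le.mp haq
    have hε := hIH q hqQ a ha A hA1 hrec
    clear hIH
    have hk1 : (0:ℝ) ≤ (k:ℝ) - 1 := by linarith
    have huq : q ≤ q ^ k := by
      calc q = q ^ 1 := (pow_one q).symm
      _ ≤ q ^ k := pow_le_pow_right₀ hq1 (by omega)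
    have huq2 : q^2 ≤ q ^ k := pow_le_pow_right₀ hq1 (by omega)
    have huq3 : q^3 ≤ q ^ k := pow_le_pow_right₀ hq1 (by omega)
    have hεC : |A k - ((5 - (k:ℝ)) + ((k:ℝ) - 1) * a - ((k:ℝ) - 1) * q)| ≤ C :=
      le_trans hε (div_le_self hC.le hs1)
    have hεC' := abs_le.mp hεC
    have h1a : ((k:ℝ)-1)*a ≤ ((k:ℝ)-1)*q := mul_le_mul_of_nonneg_left haq'.2 hk1
    have h1a' : -(((k:ℝ)-1)*q) ≤ ((k:ℝ)-1)*a := by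
      have := mul_le_mul_of_nonneg_left haq'.1 hk1
      linarith [this]
    have hkq0 : (0:ℝ) ≤ (k:ℝ)*q := by positivity
    have hkq : (k:ℝ) ≤ (k:ℝ)*q := le_mul_of_one_le_right (by positivity) hq1
    have h4k : 4*(k:ℝ) ≤ q := by linarith
    have hDpos2 : q ^ k / 2 ≤ q ^ k + 1 - A k := by
      linarith [hεC'.2, h1a, huq]
    have hDpos : (0:ℝ) < q ^ k + 1 - A k := by linarith [huq]
    have hDne : q ^ k + 1 - A k ≠ 0 := ne_of_gt hDpos
    have hkey : A (k+1) - ((5 - ((k:ℝ)+1)) + (k:ℝ)*a - (k:ℝ)*q)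
        = (q - (-(k:ℝ)*q + ((k:ℝ)-1)*a + 3 - (k:ℝ))
              * (((k:ℝ)-1)*q - ((k:ℝ)-1)*a + ((k:ℝ)-4))
            + (q ^ k - (k:ℝ)*q + ((k:ℝ)-1)*a + 3 - (k:ℝ))
              * (A k - ((5 - (k:ℝ)) + ((k:ℝ) - 1) * a - ((k:ℝ) - 1) * q)))
          / (q ^ k + 1 - A k) := by
      rw [hrec k (by omega)]
      exact step_id (k:ℝ) q a (q ^ k) (A k) hDne
    obtain ⟨P, hPdef⟩ : ∃ x : ℝ, x = -(k:ℝ)*q + ((k:ℝ)-1)*a + 3 - (k:ℝ) := ⟨_, rfl⟩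
    obtain ⟨Q', hQdef⟩ : ∃ x : ℝ, x = ((k:ℝ)-1)*q - ((k:ℝ)-1)*a + ((k:ℝ)-4) := ⟨_, rfl⟩
    obtain ⟨M, hMdef⟩ : ∃ x : ℝ, x = q ^ k - (k:ℝ)*q + ((k:ℝ)-1)*a + 3 - (k:ℝ) := ⟨_, rfl⟩
    obtain ⟨ε, hεdef⟩ : ∃ x : ℝ,
        x = A k - ((5 - (k:ℝ)) + ((k:ℝ) - 1) * a - ((k:ℝ) - 1) * q) := ⟨_, rfl⟩
    rw [← hPdef, ← hQdef, ← hMdef, ← hεdef] at hkey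
    have hεs : |ε| ≤ C / s := by rw [hεdef]; exact hε
    have hP : |P| ≤ 3*(k:ℝ)*q := by
      rw [hPdef, abs_le]
      constructor
      · linarith [h1a', hkq0, hkq]
      · linarith [h1a, hkq0, hkq]
    have hQ : |Q'| ≤ 3*(k:ℝ)*q := by
      rw [hQdef, abs_le]
      constructor
      · linarith [h1a, hkq0, hkq]
      · linarith [h1a', hkq0, hkq]
    have h3kq : 3*(k:ℝ)*q ≤ q ^ k := by
      nlinarith [mul_le_mul_of_nonneg_right h4k hq0.le, hkq0, huq2]
    have hM : |M| ≤ 2 * q ^ k := by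
      have hMP : M = q ^ k + P := by rw [hMdef, hPdef]; ring
      have hPb := abs_le.mp hP
      rw [hMP, abs_le]
      constructor <;> linarith [hPb.1, hPb.2, h3kq]
    have hnum : |q - P*Q' + M*ε| ≤ q + 9*(k:ℝ)^2*q^2 + 2*(q ^ k)*(C/s) := by
      have h1 : |P*Q'| ≤ 9*(k:ℝ)^2*q^2 := by
        rw [abs_mul]
        nlinarith [mul_le_mul hP hQ (abs_nonneg Q') (by positivity : (0:ℝ) ≤ 3*(k:ℝ)*q)]
      have h2 : |M*ε| ≤ 2*(q ^ k)*(C/s) := by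
        rw [abs_mul]
        exact mul_le_mul hM hεs (abs_nonneg _) (by positivity)
      have t1 := abs_le.mp h1
      have t2 := abs_le.mp h2
      rw [abs_le]
      constructor <;> linarith [t1.1, t1.2, t2.1, t2.2, hq0]
    have hgoalcast : ((5 : ℝ) - ((k+1:ℕ):ℝ)) + (((k+1:ℕ):ℝ) - 1) * a - (((k+1:ℕ):ℝ) - 1) * q
        = (5 - ((k:ℝ)+1)) + (k:ℝ)*a - (k:ℝ)*q := by push_cast; ring
    have h3 : q*s ≤ q ^ k := by
      linarith [mul_le_mul_of_nonneg_left hsq hq0.le, huq2]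
    have h4 : q^2*s ≤ q ^ k := by
      linarith [mul_le_mul_of_nonneg_left hsq (sq_nonneg q), huq3]
    rw [hgoalcast, hkey, abs_div, abs_of_pos hDpos, div_le_div_iff₀ hDpos hs0]
    have hC2 : |q - P*Q' + M*ε| * s ≤ (10*(k:ℝ)^2 + 2*C) * q ^ k := by
      have h1 : |q - P*Q' + M*ε| * s ≤ (q + 9*(k:ℝ)^2*q^2 + 2*(q ^ k)*(C/s)) * s :=
        mul_le_mul_of_nonneg_right hnum hs0.le
      have h2 : (q + 9*(k:ℝ)^2*q^2 + 2*(q ^ k)*(C/s)) * s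
          = q*s + 9*(k:ℝ)^2*(q^2*s) + 2*(q ^ k)*C := by
        field_simp
      have m1 : 9*(k:ℝ)^2*(q^2*s) ≤ 9*(k:ℝ)^2*(q ^ k) :=
        mul_le_mul_of_nonneg_left h4 (by positivity)
      have m2 : (1:ℝ)*(q ^ k) ≤ (k:ℝ)^2*(q ^ k) := by
        have hk1' : (1:ℝ) ≤ (k:ℝ) := by linarith
        have : (1:ℝ) ≤ (k:ℝ)^2 := by
          calc (1:ℝ) = 1^2 := by norm_num
          _ ≤ (k:ℝ)^2 := pow_le_pow_left₀ (by norm_num) hk1' 2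
        exact mul_le_mul_of_nonneg_right this (by positivity)
      linarith only [h1, h2.le, h2.ge, h3, m1, m2]
    have hC3 : ((20:ℝ)*(k:ℝ)^2 + 4*C) * (q ^ k / 2) ≤ (20*(k:ℝ)^2 + 4*C) * (q ^ k + 1 - A k) :=
      mul_le_mul_of_nonneg_left hDpos2 (by positivity)
    linarith only [hC2, hC3]
end

section
/- Let q ≥ 2 and a be real numbers with |a| ≤ 2√q. Define β(n) by β(-1) = 0, β(0) = 1, and (q^n - 1)β(n) = (q^n + q^{n-1} - a)β(n-1) - (q^{n-1} - q)β(n-2) for n ≥ 1. Then β(n) > 0 for all n ≥ 0. -/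
/-- Positivity of the β-invariants under the Hasse bound. -/
theorem beta_pos (q a : ℝ) (hq : 2 ≤ q) (ha : |a| ≤ 2 * Real.sqrt q)
    (β : ℤ → ℝ) (h0 : β (-1) = 0) (h1 : β 0 = 1)
    (hrec : ∀ n : ℤ, 1 ≤ n →
      (q ^ n - 1) * β n = (q ^ n + q ^ (n - 1) - a) * β (n - 1)
        - (q ^ (n - 1) - q) * β (n - 2)) :
    ∀ n : ℤ, 0 ≤ n → 0 < β n := by
  have hq0 : (0:ℝ) < q := by linarith
  have hsq : Real.sqrt q ^ 2 = q := Real.sq_sqrt (by linarith)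
  have hsq1 : 1 < Real.sqrt q := by nlinarith [Real.sqrt_nonneg q]
  have haq : a < q + 1 := by
    have h1 : a ≤ 2 * Real.sqrt q := le_trans (le_abs_self a) ha
    nlinarith [mul_pos (show (0:ℝ) < Real.sqrt q - 1 by linarith)
      (show (0:ℝ) < Real.sqrt q - 1 by linarith)]
  -- base case n = 1
  have hr1 := hrec 1 le_rfl
  norm_num [h0, h1] at hr1
  have hb1 : 0 < β 1 := by
    have hpos : 0 < (q - 1) * β 1 := by rw [hr1]; linarith
    rcases mul_pos_iff.mp hpos with ⟨_, h⟩ | ⟨h, _⟩ <;> linarith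
  -- base case n = 2
  have hr2 := hrec 2 (by norm_num)
  norm_num [h0, h1] at hr2
  have hq2 : q ^ (2:ℤ) = q * q := by
    rw [show (2:ℤ) = 1 + 1 from rfl, zpow_add₀ (ne_of_gt hq0), zpow_one]
  rw [sq] at hr2
  have hq21 : 0 < q * q - 1 := by nlinarith
  have hb2 : β 1 ≤ β 2 ∧ 0 < β 2 := by
    have h3 : (q * q - 1) * β 1 ≤ (q * q - 1) * β 2 := by
      rw [hr2]; nlinarith [mul_pos (show (0:ℝ) < q + 1 - a by linarith) hb1]
    have hle : β 1 ≤ β 2 := le_of_mul_le_mul_left h3 hq21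
    exact ⟨hle, lt_of_lt_of_le hb1 hle⟩
  -- inductive step
  have key : ∀ n : ℤ, 3 ≤ n → 0 < β (n - 1) → β (n - 2) ≤ β (n - 1) →
      0 < β n ∧ β (n - 1) ≤ β n := by
    intro n hn hb hmono
    have hr := hrec n (by linarith)
    have hP : q ^ n = q ^ (n - 1) * q := by
      rw [← zpow_add_one₀ (ne_of_gt hq0)]; ring_nf
    set P := q ^ (n - 1) with hPdef
    have hPq : q ≤ P := by
      calc q = q ^ (1:ℤ) := (zpow_one q).symm
        _ ≤ P := by
          apply zpow_le_zpow_right₀ (by linarith)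
          omega
    rw [hP] at hr
    have hPq1 : 0 < P * q - 1 := by nlinarith
    have step1 : (P * q + q - a) * β (n - 1) ≤ (P * q - 1) * β n := by
      nlinarith [mul_le_mul_of_nonneg_left hmono (show (0:ℝ) ≤ P - q by linarith)]
    have h3 : (P * q - 1) * β (n - 1) ≤ (P * q - 1) * β n := by
      nlinarith [mul_pos (show (0:ℝ) < q + 1 - a by linarith) hb]
    have hmain : β (n - 1) ≤ β n := le_of_mul_le_mul_left h3 hPq1
    exact ⟨lt_of_lt_of_le hb hmain, hmain⟩
  have main : ∀ k : ℕ, 0 < β ((k:ℤ) + 1) ∧ 0 < β ((k:ℤ) + 2) ∧ β ((k:ℤ) + 1) ≤ β ((k:ℤ) + 2) := by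
    intro k
    induction k with
    | zero =>
      refine ⟨by simpa using hb1, by simpa using hb2.2, by simpa using hb2.1⟩
    | succ m ih =>
      obtain ⟨h1', h2', h3'⟩ := ih
      have e1 : (m:ℤ) + 3 - 1 = (m:ℤ) + 2 := by ring
      have e2 : (m:ℤ) + 3 - 2 = (m:ℤ) + 1 := by ring
      have hk := key ((m:ℤ) + 3) (by omega)
        (by rw [e1]; exact h2') (by rw [e1, e2]; exact h3')
      rw [e1] at hk
      have f1 : ((m + 1 : ℕ) : ℤ) + 1 = (m:ℤ) + 2 := by push_cast; ring
      have f2 : ((m + 1 : ℕ) : ℤ) + 2 = (m:ℤ) + 3 := by push_cast; ring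
      rw [f1, f2]
      exact ⟨h2', hk.1, hk.2⟩
  intro n hn
  lift n to ℕ using hn
  cases n with
  | zero => simpa using h1 ▸ one_pos
  | succ m =>
    have := (main m).1
    push_cast
    exact this
end

section
/- Let q ≥ 2 and a real with |a| ≤ 2√q, and let β(n) be defined by the recursion β(-1)=0, β(0)=1, (q^n-1)β(n) = (q^n + q^{n-1} - a)β(n-1) - (q^{n-1} - q)β(n-2). Then for all n ≥ 2, β(n)/β(n-1) < (√(q^n) + 1)/(√(q^n) - 1). -/
set_option maxHeartbeats 1000000 in
/-- Upper bound of Weng–Zagier: β(n)/β(n-1) < (√(q^n)+1)/(√(q^n)-1) for n ≥ 2. -/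
theorem beta_ratio_upper (q a : ℝ) (hq : 2 ≤ q) (ha : |a| ≤ 2 * Real.sqrt q)
    (β : ℤ → ℝ) (h0 : β (-1) = 0) (h1 : β 0 = 1)
    (hrec : ∀ n : ℤ, 1 ≤ n →
      (q ^ n - 1) * β n = (q ^ n + q ^ (n - 1) - a) * β (n - 1)
        - (q ^ (n - 1) - q) * β (n - 2)) :
    ∀ n : ℤ, 2 ≤ n →
      β n / β (n - 1) < (Real.sqrt (q ^ n) + 1) / (Real.sqrt (q ^ n) - 1) := by
  have hq0 : (0 : ℝ) < q := by linarith
  set t := Real.sqrt q with htdef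
  have ht0 : 0 < t := Real.sqrt_pos.mpr hq0
  have htq : t * t = q := Real.mul_self_sqrt hq0.le
  have ht1 : 1 < t := by nlinarith
  have ha2 : a ≤ 2 * t := (abs_le.mp ha).2
  have ha1 : -(2 * t) ≤ a := (abs_le.mp ha).1
  have hqq1 : 0 < q * q - 1 := by nlinarith
  have hq1 : 0 < q - 1 := by linarith
  have hqa : q * a ≤ q * q * q + 1 := by
    have h1' : q * a ≤ 2 * (t * t * t) := by
      rw [← htq]
      nlinarith [mul_le_mul_of_nonneg_left ha2 (mul_nonneg ht0.le ht0.le)]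
    have h2' : 2 * (t * t * t) ≤ q * q * q + 1 := by
      rw [← htq]; nlinarith [sq_nonneg (t * t * t - 1)]
    linarith
  have hA0 : 0 < q * q + q - a := by
    have : 0 < t * (t - 1) * (t * t + t + 2) :=
      mul_pos (mul_pos ht0 (by linarith)) (by nlinarith)
    nlinarith [this]
  have key : ∀ n : ℤ, 2 ≤ n →
      0 < β (n - 1) ∧ 0 < β n ∧ β (n - 1) ≤ q * β n ∧
        (t ^ n - 1) * β n < (t ^ n + 1) * β (n - 1) := by
    intro n hn
    refine Int.le_induction
      (motive := fun k _ => 0 < β (k - 1) ∧ 0 < β k ∧ β (k - 1) ≤ q * β k ∧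
        (t ^ k - 1) * β k < (t ^ k + 1) * β (k - 1)) ?_ ?_ n hn
    · -- base case k = 2
      have e1 := hrec 1 le_rfl
      have e2 := hrec 2 (by norm_num)
      have hz1 : (1 : ℤ) - 1 = 0 := by ring
      have hz2 : (1 : ℤ) - 2 = -1 := by ring
      have hz3 : (2 : ℤ) - 1 = 1 := by ring
      have hz4 : (2 : ℤ) - 2 = 0 := by ring
      rw [hz1, hz2, h0, h1, zpow_one, zpow_zero] at e1
      rw [hz3, hz4, h1, zpow_one] at e2
      have hq2 : (q : ℝ) ^ (2 : ℤ) = q * q := by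
        rw [show (2 : ℤ) = 1 + 1 by norm_num, zpow_add_one₀ hq0.ne', zpow_one]
      rw [hq2] at e2
      have e1' : (q - 1) * β 1 = q + 1 - a := by linarith
      have e2' : (q * q - 1) * β 2 = (q * q + q - a) * β 1 := by linarith
      have hb1 : 0 < β 1 := by
        by_contra hcon
        push_neg at hcon
        have hh1 : 0 ≤ (q - 1) * (-β 1) := mul_nonneg hq1.le (neg_nonneg.mpr hcon)
        have hh2 : 0 < (t - 1) * (t - 1) := mul_pos (by linarith) (by linarith)
        nlinarith [hh1, hh2]
      have hb2 : 0 < β 2 := by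
        by_contra hcon
        push_neg at hcon
        have hh1 : 0 ≤ (q * q - 1) * (-β 2) := mul_nonneg hqq1.le (neg_nonneg.mpr hcon)
        have hh2 : 0 < (q * q + q - a) * β 1 := mul_pos hA0 hb1
        linarith [hh1, hh2, e2']
      have ht2 : t ^ (2 : ℤ) = t * t := by
        rw [show (2 : ℤ) = 1 + 1 by norm_num, zpow_add_one₀ ht0.ne', zpow_one]
      refine ⟨by rw [hz3]; exact hb1, hb2, ?_, ?_⟩
      · rw [hz3]
        by_contra hcon
        push_neg at hcon
        have e2q : q * ((q * q - 1) * β 2) = q * ((q * q + q - a) * β 1) := by rw [e2']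
        have hint1 : 0 ≤ (q * q * q + 1 - q * a) * β 1 :=
          mul_nonneg (by linarith) hb1.le
        have hint2 : 0 < (q * q - 1) * (β 1 - q * β 2) :=
          mul_pos hqq1 (by linarith)
        linarith [e2q, hint1, hint2]
      · rw [hz3, ht2, htq]
        have hq1a : 0 < q + 1 + a := by
          nlinarith [mul_pos (show (0:ℝ) < t - 1 by linarith) (show (0:ℝ) < t - 1 by linarith)]
        have hKlt : (q - 1) * (q * q + q - a) < (q + 1) * (q * q - 1) := by
          nlinarith [mul_pos hq1 hq1a]
        by_contra hcon
        push_neg at hcon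
        have e2t : (q - 1) * ((q * q - 1) * β 2) = (q - 1) * ((q * q + q - a) * β 1) := by
          rw [e2']
        have hintA := mul_lt_mul_of_pos_right hKlt hb1
        have hintB := mul_le_mul_of_nonneg_left hcon hqq1.le
        linarith [e2t, hintA, hintB]
    · -- successor step
      intro n hn ih
      obtain ⟨hbprev, hb, hlow, hupp⟩ := ih
      have hz1 : (n : ℤ) + 1 - 1 = n := by ring
      have hz2 : (n : ℤ) + 1 - 2 = n - 1 := by ring
      have h := hrec (n + 1) (by linarith)
      rw [hz1, hz2] at h
      set X := t ^ n with hXdef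
      have hXpos : 0 < X := zpow_pos ht0 n
      have hXt : t ≤ X := by
        have := zpow_le_zpow_right₀ ht1.le (show (1 : ℤ) ≤ n by linarith)
        rwa [zpow_one] at this
      have hX1 : 1 < X := lt_of_lt_of_le ht1 hXt
      have hqn : q ^ n = X * X := by rw [← htq, mul_zpow]
      have htn1 : t ^ (n + 1) = X * t := zpow_add_one₀ ht0.ne' n
      have hqn1 : q ^ (n + 1) = (X * t) * (X * t) := by
        rw [← htq, mul_zpow, htn1]
      rw [hqn, hqn1] at h
      have hcoef : 0 ≤ X * X - q := by
        nlinarith [mul_le_mul_of_nonneg_left hXt ht0.le,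
          mul_le_mul_of_nonneg_right hXt hXpos.le]
      have hXtgt : 1 < X * t := by
        nlinarith [mul_pos (sub_pos.mpr hX1) (sub_pos.mpr ht1)]
      have hden : 0 < (X * t) * (X * t) - 1 := by
        nlinarith [mul_pos (sub_pos.mpr hXtgt) (mul_pos hXpos ht0)]
      have h5 : (X * X - q) * β (n - 1) ≤ (X * X - q) * (q * β n) :=
        mul_le_mul_of_nonneg_left hlow hcoef
      have hq2t : q * q = t * t * (t * t) := by rw [htq]
      have hApos : 0 < X * X - a + q * q := by
        have hpp : 0 < t * (t - 1) * (t * t + t + 2) :=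
          mul_pos (mul_pos ht0 (by linarith)) (by nlinarith)
        nlinarith [hpp, hcoef]
      have hcancel : t * t * (X * X * β n) = q * (X * X * β n) := by rw [htq]
      have h6 : (X * X - a + q * q) * β n ≤ ((X * t) * (X * t) - 1) * β (n + 1) := by
        linarith [h, h5, hcancel]
      have hb3 : 0 < β (n + 1) := by
        by_contra hcon
        push_neg at hcon
        linarith [h6, mul_pos hApos hb, mul_nonneg hden.le (neg_nonneg.mpr hcon)]
      have hlow' : β n ≤ q * β (n + 1) := by
        by_contra hcon
        push_neg at hcon
        have h6q := mul_le_mul_of_nonneg_left h6 hq0.le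
        have hint2 : 0 ≤ (q * q * q + 1 - q * a) * β n :=
          mul_nonneg (by linarith) hb.le
        have hcancel2 : q * (X * X * β n) = t * t * (X * X * β n) := hcancel.symm
        have hcontra := mul_pos hden (sub_pos.mpr hcon)
        linarith [h6q, hint2, hcancel2, hcontra]
      refine ⟨by rw [hz1]; exact hb, hb3, by rw [hz1]; exact hlow', ?_⟩
      rw [hz1, htn1]
      have h9 : (X * X - q) * ((X - 1) * β n) ≤ (X * X - q) * ((X + 1) * β (n - 1)) :=
        mul_le_mul_of_nonneg_left hupp.le hcoef
      have hK : (X + 1) * ((X * t) * (X * t) + X * X - a) - (X - 1) * (X * X - t * t)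
          < (X + 1) * ((X * t + 1) * (X * t + 1)) := by
        nlinarith [mul_nonneg (show (0:ℝ) ≤ X + 1 by linarith) (show (0:ℝ) ≤ a + 2 * t by linarith),
          mul_nonneg (mul_nonneg (show (0:ℝ) ≤ t - 1 by linarith) (show (0:ℝ) ≤ X - t by linarith)) hXpos.le,
          mul_nonneg (mul_nonneg (show (0:ℝ) ≤ t - 1 by linarith) (show (0:ℝ) ≤ X - 1 by linarith)) hXpos.le,
          mul_pos (show (0:ℝ) < t - 1 by linarith) (show (0:ℝ) < t - 1 by linarith)]
      rw [htq] at hK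
      have e10 : (X + 1) * (((X * t) * (X * t) - 1) * β (n + 1)) =
          (X + 1) * (((X * t) * (X * t) + X * X - a) * β n) -
            (X + 1) * ((X * X - q) * β (n - 1)) := by
        rw [h]; ring
      have h11 : (X + 1) * (((X * t) * (X * t) - 1) * β (n + 1)) ≤
          ((X + 1) * ((X * t) * (X * t) + X * X - a) - (X - 1) * (X * X - q)) * β n := by
        linarith [e10, h9]
      have h12 := mul_lt_mul_of_pos_right hK hb
      have hM : 0 < (X + 1) * (X * t + 1) := by positivity
      by_contra hcon
      push_neg at hcon
      have h13 := mul_le_mul_of_nonneg_left hcon hM.le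
      linarith [h11, h12, h13]
  intro n hn
  obtain ⟨hbprev, hb, _, hupp⟩ := key n hn
  have htn : 1 < t ^ n := by
    have := zpow_le_zpow_right₀ ht1.le (show (1 : ℤ) ≤ n by linarith)
    rw [zpow_one] at this
    linarith
  have hs : Real.sqrt (q ^ n) = t ^ n := by
    have hqX : q ^ n = (t ^ n) * (t ^ n) := by rw [← htq, mul_zpow]
    rw [hqX, Real.sqrt_mul_self (zpow_pos ht0 n).le]
  rw [hs, div_lt_div_iff₀ hbprev (by linarith : (0:ℝ) < t ^ n - 1)]
  linarith [hupp]
end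

section
/- Let q ≥ 2 and a real with |a| ≤ 2√q. Define a(3) := 1 - q² + a + (q² - q)(q² - 1)/(q² + q - a). Then a(3) < 2 and a(3) > -2·q^{3/2} for all sufficiently large q (e.g. q ≥ 16). -/
/-- Refined Weng–Zagier bounds in rank 3: 2 > a(3) > -2√(q³) for q ≥ 16. -/
theorem a_three_bounds (q a : ℝ) (hq : 16 ≤ q) (ha : |a| ≤ 2 * Real.sqrt q) :
    (1 - q ^ 2 + a + (q ^ 2 - q) * (q ^ 2 - 1) / (q ^ 2 + q - a) < 2)
    ∧ (-2 * Real.sqrt (q ^ 3)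
        < 1 - q ^ 2 + a + (q ^ 2 - q) * (q ^ 2 - 1) / (q ^ 2 + q - a)) := by
  have hq0 : (0:ℝ) ≤ q := by linarith
  set s := Real.sqrt q with hs_def
  have hs2 : s ^ 2 = q := Real.sq_sqrt hq0
  have hs4 : (4:ℝ) ≤ s := by
    have h16 : Real.sqrt 16 ≤ s := Real.sqrt_le_sqrt hq
    rwa [show (16:ℝ) = 4 ^ 2 by norm_num, Real.sqrt_sq (by norm_num : (0:ℝ) ≤ 4)] at h16
  obtain ⟨hal, har⟩ := abs_le.mp ha
  have hal' : -(2 * s) ≤ a := hal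
  have hD : 0 < q ^ 2 + q - a := by nlinarith
  have hsq3 : Real.sqrt (q ^ 3) = q * s := by
    rw [show q ^ 3 = (q * s) ^ 2 by rw [mul_pow, hs2]; ring]
    exact Real.sqrt_sq (by positivity)
  constructor
  · have h1 : (q ^ 2 - q) * (q ^ 2 - 1) / (q ^ 2 + q - a) < 2 - (1 - q ^ 2 + a) := by
      rw [div_lt_iff₀ hD, ← hs2]
      nlinarith [sq_nonneg a,
        mul_nonneg (by linarith : (0:ℝ) ≤ 2 * s - a)
          (by positivity : (0:ℝ) ≤ 2 * s ^ 4 + s ^ 2 + 1),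
        mul_nonneg (by linarith : (0:ℝ) ≤ s - 4) (by positivity : (0:ℝ) ≤ s ^ 5),
        mul_nonneg (by linarith : (0:ℝ) ≤ s - 4) (by positivity : (0:ℝ) ≤ s ^ 4),
        mul_nonneg (by linarith : (0:ℝ) ≤ s - 4) (by positivity : (0:ℝ) ≤ s ^ 3),
        mul_nonneg (by linarith : (0:ℝ) ≤ s - 4) (by positivity : (0:ℝ) ≤ s ^ 2),
        mul_nonneg (by linarith : (0:ℝ) ≤ s - 4) (by linarith : (0:ℝ) ≤ s)]
    linarith
  · rw [hsq3]
    have h2 : -2 * (q * s) - (1 - q ^ 2 + a) < (q ^ 2 - q) * (q ^ 2 - 1) / (q ^ 2 + q - a) := by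
      rw [lt_div_iff₀ hD, ← hs2]
      nlinarith [mul_nonneg (by linarith : (0:ℝ) ≤ 2 * s - a) (by linarith : (0:ℝ) ≤ 2 * s + a),
        mul_nonneg (by linarith : (0:ℝ) ≤ a + 2 * s)
          (by nlinarith [mul_nonneg (by linarith : (0:ℝ) ≤ s - 4) (by positivity : (0:ℝ) ≤ s ^ 3), mul_nonneg (by linarith : (0:ℝ) ≤ s - 4) (by linarith : (0:ℝ) ≤ s)] : (0:ℝ) ≤ 2 * s ^ 4 + s ^ 2 - 1 - 2 * s ^ 3),
        mul_nonneg (by linarith : (0:ℝ) ≤ s - 4) (by positivity : (0:ℝ) ≤ s ^ 6),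
        mul_nonneg (by linarith : (0:ℝ) ≤ s - 4) (by positivity : (0:ℝ) ≤ s ^ 5),
        mul_nonneg (by linarith : (0:ℝ) ≤ s - 4) (by positivity : (0:ℝ) ≤ s ^ 4),
        mul_nonneg (by linarith : (0:ℝ) ≤ s - 4) (by positivity : (0:ℝ) ≤ s ^ 3),
        mul_nonneg (by linarith : (0:ℝ) ≤ s - 4) (by positivity : (0:ℝ) ≤ s ^ 2),
        mul_nonneg (by linarith : (0:ℝ) ≤ s - 4) (by linarith : (0:ℝ) ≤ s)]
    linarith
end

section
/- Let q ≥ 2 and a be real with |a| ≤ 2√q. Define a(n) by a(1) = a and a(n+1) = 1 - q^n + a + (q^n - q)(q^n - 1)/(q^n + 1 - a(n)), assuming q^n + 1 - a(n) > 0 at each step. Then for every fixed n ≥ 3 there is Q₀(n) such that for q ≥ Q₀(n), a(n) < 0; in fact a(n) ≤ -(n-1)q/2. -/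
set_option maxHeartbeats 2000000


/-- For fixed n ≥ 3 and q large, a(n) is very negative: a(n) ≤ -(n-1)q/2 < 0. -/
theorem a_n_negative (n : ℕ) (hn : 3 ≤ n) :
    ∃ Q₀ : ℝ, ∀ q : ℝ, Q₀ ≤ q → ∀ a : ℝ, |a| ≤ 2 * Real.sqrt q →
      ∀ A : ℕ → ℝ, A 1 = a →
        (∀ k : ℕ, 1 ≤ k → 0 < q ^ k + 1 - A k) →
        (∀ k : ℕ, 1 ≤ k →
          A (k + 1) = 1 - q ^ k + a + (q ^ k - q) * (q ^ k - 1) / (q ^ k + 1 - A k)) →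
        A n < 0 ∧ A n ≤ -((n : ℝ) - 1) * q / 2 := by
  refine ⟨100 * (n : ℝ) ^ 2, ?_⟩
  intro q hq a ha A hA1 hpos hrec
  have hn3 : (3 : ℝ) ≤ (n : ℝ) := by exact_mod_cast hn
  have hq900 : (900 : ℝ) ≤ q := by nlinarith
  have hq0 : (0 : ℝ) ≤ q := by linarith
  have hq1 : (1 : ℝ) ≤ q := by linarith
  set s := Real.sqrt q with hs
  have hs2 : s ^ 2 = q := Real.sq_sqrt hq0
  have hs0 : 0 ≤ s := Real.sqrt_nonneg q
  have hs30 : (30 : ℝ) ≤ s := by nlinarith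
  have hsq : 30 * s ≤ q := by nlinarith
  have ha1 : a ≤ 2 * s := (abs_le.mp ha).2
  have ha2 : -(2 * s) ≤ a := (abs_le.mp ha).1
  have key : ∀ k : ℕ, 2 ≤ k → k ≤ n →
      A k ≤ 3 * (k : ℝ) - 5 + ((k : ℝ) - 1) * (a - q) := by
    intro k hk
    induction k, hk using Nat.le_induction with
    | base =>
      intro _
      have h2 := hrec 1 le_rfl
      rw [h2, pow_one, sub_self, zero_mul, zero_div]
      push_cast
      linarith
    | succ k hk2 IH =>
      intro hkn
      have hkn' : k ≤ n := le_of_lt (Nat.lt_of_succ_le hkn)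
      have HU := IH hkn'
      have hK2 : (2 : ℝ) ≤ (k : ℝ) := by exact_mod_cast hk2
      have hKn : (k : ℝ) + 1 ≤ (n : ℝ) := by exact_mod_cast hkn
      have hD := hpos k (by omega)
      have hr := hrec k (by omega)
      have hXq2 : q ^ 2 ≤ q ^ k := pow_le_pow_right₀ hq1 hk2
      have hq2 : (1 : ℝ) ≤ q ^ 2 := by nlinarith
      set K := (k : ℝ) with hKdef
      set c : ℝ := (K - 1) * (q - a) - (3 * K - 5) with hc
      have hAk : A k ≤ -c := by
        have : 3 * K - 5 + (K - 1) * (a - q) = -c := by rw [hc]; ring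
        linarith [HU]
      have hc0 : 0 ≤ c := by
        have h1 : 0 ≤ (K - 1) * (q - a - 3) :=
          mul_nonneg (by linarith) (by linarith)
        have : c = (K - 1) * (q - a - 3) + 2 := by rw [hc]; ring
        linarith
      have hcU : c ≤ 2 * (n : ℝ) * q := by
        have h1 : (K - 1) * (q - a) ≤ (n : ℝ) * (2 * q) := by
          apply mul_le_mul (by linarith) (by linarith) (by linarith) (by linarith)
        have : c ≤ (K - 1) * (q - a) := by rw [hc]; nlinarith
        linarith
      -- main polynomial inequality
      have hmain : (q ^ k - q) * (q ^ k - 1) ≤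
          (q ^ k - q - c + 2) * (q ^ k + 1 + c) := by
        rcases eq_or_lt_of_le hk2 with hk2' | hk3
        · -- k = 2
          have hkk : k = 2 := hk2'.symm
          subst hkk
          have hK : K = 2 := by rw [hKdef]; norm_num
          have hcval : c = q - a - 1 := by rw [hc, hK]; ring
          rw [hcval]
          have haq : a ^ 2 ≤ 4 * q := by nlinarith [sq_nonneg (2 * s - a), sq_nonneg (2 * s + a)]
          have H1 : 0 ≤ (2 * s + a) * q := mul_nonneg (by linarith) hq0
          have H2 : 30 * (s * q) ≤ q * q := by nlinarith
          have H3 : 900 * q ≤ q ^ 2 := by nlinarith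
          have L : 0 ≤ 2 * q ^ 2 + 3 * (a * q) - a ^ 2 + 2 * q - 3 * a := by
            linarith [H1, H2, H3, haq, hsq, ha1, hq900]
          linarith [L]
        · -- 3 ≤ k
          have hk3' : 3 ≤ k := hk3
          have hX3 : q ^ 3 ≤ q ^ k := pow_le_pow_right₀ hq1 hk3'
          have hnq : q ≤ (n : ℝ) * q := by nlinarith
          have h1 : q + c - 2 ≤ 3 * ((n : ℝ) * q) := by linarith
          have h2 : 1 + c ≤ 3 * ((n : ℝ) * q) := by nlinarith
          have h3 : (q + c - 2) * (1 + c) ≤ (3 * ((n : ℝ) * q)) * (3 * ((n : ℝ) * q)) := by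
            apply mul_le_mul h1 h2 (by linarith) (by positivity)
          have h4 : 4 * (100 * (n : ℝ) ^ 2) * q ^ 2 ≤ 4 * q * q ^ 2 := by nlinarith
          have h5 : q ≤ (n : ℝ) ^ 2 * q ^ 2 := by nlinarith
          have h6 : 4 * q * q ^ 2 ≤ 4 * q ^ k := by nlinarith
          nlinarith [h3, h4, h5, h6]
      have hXc : 0 < q ^ k + 1 + c := by nlinarith
      have hN0 : 0 ≤ (q ^ k - q) * (q ^ k - 1) :=
        mul_nonneg (by nlinarith) (by nlinarith)
      have hT0 : 0 ≤ q ^ k - q - c + 2 := by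
        by_contra h
        push_neg at h
        nlinarith [hmain, hN0, hXc]
      have hfrac : (q ^ k - q) * (q ^ k - 1) / (q ^ k + 1 - A k) ≤ q ^ k - q - c + 2 := by
        rw [div_le_iff₀ hD]
        calc (q ^ k - q) * (q ^ k - 1) ≤ (q ^ k - q - c + 2) * (q ^ k + 1 + c) := hmain
          _ ≤ (q ^ k - q - c + 2) * (q ^ k + 1 - A k) := by
              apply mul_le_mul_of_nonneg_left (by linarith) hT0
      rw [hr]
      push_cast
      have hcexp : c = (K - 1) * (q - a) - (3 * K - 5) := hc
      linarith [hfrac]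
  have hend := key n (by omega) le_rfl
  have hkey2 : 0 ≤ ((n : ℝ) - 1) * (q / 2 - 2 * s - 3) :=
    mul_nonneg (by linarith) (by linarith)
  have hkey3 : 0 ≤ ((n : ℝ) - 1) * (2 * s - a) :=
    mul_nonneg (by linarith) (by linarith)
  have hfin : A n ≤ -((n : ℝ) - 1) * q / 2 := by linarith
  refine ⟨?_, hfin⟩
  have : -((n : ℝ) - 1) * q / 2 < 0 := by nlinarith
  linarith
end

section
/- Let q ≥ 2 and a real with |a| ≤ 2√q, and let β(n) satisfy β(-1)=0, β(0)=1, (q^n-1)β(n) = (q^n + q^{n-1} - a)β(n-1) - (q^{n-1} - q)β(n-2). Then the a-invariants a(n) := (q^n + 1) - (q^n - 1)β(n)/β(n-1) satisfy q^n + 1 - a(n) = (q^n - 1)β(n)/β(n-1) > 0 for all n ≥ 1, so the structural recursion a(n+1) = 1 - q^n + a + (q^n - q)(q^n - 1)/(q^n + 1 - a(n)) is well-defined (no division by zero) for all n ≥ 1. -/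
set_option maxHeartbeats 1000000


/-- The denominator in the structural recursion never vanishes:
q^n + 1 - a(n) = (q^n - 1)β(n)/β(n-1) > 0 for all n ≥ 1. -/
theorem denominator_pos (q a : ℝ) (hq : 2 ≤ q) (ha : |a| ≤ 2 * Real.sqrt q)
    (β : ℤ → ℝ) (h0 : β (-1) = 0) (h1 : β 0 = 1)
    (hrec : ∀ n : ℤ, 1 ≤ n →
      (q ^ n - 1) * β n = (q ^ n + q ^ (n - 1) - a) * β (n - 1)
        - (q ^ (n - 1) - q) * β (n - 2)) :
    ∀ n : ℤ, 1 ≤ n →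
      q ^ n + 1 - ((q ^ n + 1) - (q ^ n - 1) * β n / β (n - 1))
        = (q ^ n - 1) * β n / β (n - 1)
      ∧ 0 < (q ^ n - 1) * β n / β (n - 1) := by
  have hq0 : (0:ℝ) < q := by linarith
  have hq0' : q ≠ 0 := ne_of_gt hq0
  have ha2 := (abs_le.mp ha).2
  have hs : Real.sqrt q ^ 2 = q := Real.sq_sqrt hq0.le
  have hs1 : 1 < Real.sqrt q := by nlinarith [Real.sqrt_nonneg q]
  have haq : a < q + 1 := by
    nlinarith [mul_pos (sub_pos.mpr hs1) (sub_pos.mpr hs1)]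
  have haq2 : a ≤ 2 * q := by nlinarith [Real.sqrt_nonneg q]
  have hxpos : ∀ m : ℕ, 0 < q ^ (m:ℤ) := fun m => zpow_pos hq0 _
  have hx1 : ∀ m : ℕ, 1 ≤ q ^ (m:ℤ) := by
    intro m
    rw [zpow_natCast]
    exact one_le_pow₀ (by linarith)
  have key : ∀ m : ℕ, 0 < β (m:ℤ) ∧ 0 < β ((m:ℤ)+1) ∧
      (q ^ ((m:ℤ)+1) - q) * ((q ^ ((m:ℤ)+1) - q ^ (m:ℤ)) * β (m:ℤ))
        ≤ (q ^ ((m:ℤ)+1) - q) * ((q ^ ((m:ℤ)+1) - 1) * β ((m:ℤ)+1)) := by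
    intro m
    induction m with
    | zero =>
      have hr := hrec 1 le_rfl
      norm_num [h0, h1] at hr
      have hb1 : 0 < β 1 := by
        by_contra hcon
        push_neg at hcon
        nlinarith [mul_nonpos_of_nonneg_of_nonpos (show (0:ℝ) ≤ q - 1 by linarith) hcon]
      refine ⟨by norm_num [h1], by norm_num [hb1], ?_⟩
      norm_num
    | succ m ih =>
      obtain ⟨ihb0, ihb1, ihW⟩ := ih
      have hx : 0 < q ^ (m:ℤ) := hxpos m
      have hx1' : 1 ≤ q ^ (m:ℤ) := hx1 m
      set x := q ^ (m:ℤ) with hxdef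
      have e1 : q ^ ((m:ℤ)+1) = x * q := by rw [zpow_add_one₀ hq0']
      have e2 : q ^ ((m:ℤ)+2) = x * q * q := by
        rw [show (m:ℤ)+2 = ((m:ℤ)+1)+1 by ring, zpow_add_one₀ hq0', e1]
      have hr := hrec ((m:ℤ)+2) (by omega)
      rw [show (m:ℤ)+2-1 = (m:ℤ)+1 by ring, show (m:ℤ)+2-2 = (m:ℤ) by ring,
        e1, e2] at hr
      rw [e1] at ihW
      -- key coefficient inequality
      have hA : (0:ℝ) ≤ (x*q - x) * (q + 1 - a) :=
        mul_nonneg (by nlinarith) (by linarith)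
      have hB : (0:ℝ) ≤ q * x * x * (q - 2) := by
        have := mul_nonneg (mul_nonneg (mul_nonneg hq0.le hx.le) hx.le)
          (show (0:ℝ) ≤ q - 2 by linarith)
        linarith
      have hcoef : (x*q*q - x*q) * (x*q - x)
          ≤ (x*q - x) * (x*q*q + x*q - a) - (x*q - q) * (x*q - 1) := by
        nlinarith [hA, hB, mul_nonneg hq0.le (show (0:ℝ) ≤ x - 1 by linarith)]
      have hcoefB := mul_le_mul_of_nonneg_right hcoef ihb1.le
      have hr2 : (x*q - x) * ((x*q*q - 1) * β ((m:ℤ)+2))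
          = (x*q - x) * ((x*q*q + x*q - a) * β ((m:ℤ)+1))
            - (x*q - x) * ((x*q - q) * β (m:ℤ)) := by
        linear_combination (x*q - x) * hr
      have hS' : (x*q - x) * ((x*q*q - x*q) * β ((m:ℤ)+1))
          ≤ (x*q - x) * ((x*q*q - 1) * β ((m:ℤ)+2)) := by
        linarith [hr2, ihW, hcoefB]
      have hpos : (0:ℝ) < x*q - x := by nlinarith
      have hS : (x*q*q - x*q) * β ((m:ℤ)+1) ≤ (x*q*q - 1) * β ((m:ℤ)+2) :=
        le_of_mul_le_mul_left hS' hpos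
      have hB2 : 0 < β ((m:ℤ)+2) := by
        have h6 : (0:ℝ) < (x*q*q - 1) * β ((m:ℤ)+2) :=
          lt_of_lt_of_le (mul_pos (by nlinarith) ihb1) hS
        rcases mul_pos_iff.mp h6 with ⟨_, h⟩ | ⟨h, _⟩
        · exact h
        · nlinarith
      have hW' := mul_le_mul_of_nonneg_left hS (show (0:ℝ) ≤ x*q*q - q by nlinarith)
      refine ⟨?_, ?_, ?_⟩
      · push_cast
        exact ihb1
      · push_cast
        rw [show ((m:ℤ)+1)+1 = (m:ℤ)+2 by ring]
        exact hB2
      · push_cast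
        rw [show ((m:ℤ)+1)+1 = (m:ℤ)+2 by ring, e1, e2]
        exact hW'
  intro n hn
  obtain ⟨m, hm⟩ : ∃ m : ℕ, (m:ℤ) = n - 1 :=
    ⟨(n-1).toNat, Int.toNat_of_nonneg (by omega)⟩
  obtain ⟨hb0, hb1, _⟩ := key m
  rw [hm] at hb0 hb1
  rw [show n - 1 + 1 = n by ring] at hb1
  have hq1 : 1 ≤ q ^ (n-1) := by rw [← hm]; exact hx1 m
  have hqn : 1 < q ^ n := by
    rw [show n = (n-1)+1 by ring, zpow_add_one₀ hq0']
    nlinarith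
  constructor
  · ring
  · exact div_pos (mul_pos (by linarith) hb1) hb0
end
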